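/- Completeness of the translation t for S4: with t defined by (□n A)^t = □(⋀_{i=0}^{n} q_i → A^t), if Γ^t ⊢_{S4(Q)} A^t in ordinary unimodal S4, then Γ ⊢_{S4_h} A. -/

import Mathlib

/-- Poly-modal formulas with modalities `□n` for `n : ℕ`. -/
inductive Fm : Type
  | atom : ℕ → Fm
  | bot  : Fm
  | and  : Fm → Fm → Fm
  | or   : Fm → Fm → Fm
  | imp  : Fm → Fm → Fm
  | neg  : Fm → Fm
  | box  : ℕ → Fm → Fm
  deriving DecidableEq

def Fm.top : Fm := Fm.neg Fm.bot

/-- `i` occurs as a modality index in the formula. -/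
def occursBox (i : ℕ) : Fm → Prop
  | .atom _ => False
  | .bot => False
  | .and A B => occursBox i A ∨ occursBox i B
  | .or A B => occursBox i A ∨ occursBox i B
  | .imp A B => occursBox i A ∨ occursBox i B
  | .neg A => occursBox i A
  | .box n A => i = n ∨ occursBox i A

/-- `n` is strictly greater than every modality index occurring in `A`
    (the paper's "`n > r(A)`"). -/
def BoxLt (A : Fm) (n : ℕ) : Prop := ∀ i, occursBox i A → i < n

/-- The language `L∞`: each box index strictly exceeds all box indices in its scope. -/
inductive Linf : Fm → Prop
  | atom (k : ℕ) : Linf (.atom k)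
  | bot : Linf .bot
  | and {A B : Fm} : Linf A → Linf B → Linf (.and A B)
  | or {A B : Fm} : Linf A → Linf B → Linf (.or A B)
  | imp {A B : Fm} : Linf A → Linf B → Linf (.imp A B)
  | neg {A : Fm} : Linf A → Linf (.neg A)
  | box {A : Fm} (n : ℕ) : Linf A → BoxLt A n → Linf (.box n A)

/-- Boolean evaluation treating atoms and boxed formulas as propositional atoms. -/
def evalWith (v : Fm → Bool) : Fm → Bool
  | .atom k => v (.atom k)
  | .bot => false
  | .and A B => evalWith v A && evalWith v B
  | .or A B => evalWith v A || evalWith v B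
  | .imp A B => !(evalWith v A) || evalWith v B
  | .neg A => !(evalWith v A)
  | .box n A => v (.box n A)

/-- Classical propositional tautologies (on `L∞`-formulas as atoms). -/
def Taut (A : Fm) : Prop := ∀ v, evalWith v A = true

def axH (F : Fm) : Prop := ∃ A n, Linf (Fm.box n A) ∧ F = (Fm.box n A).imp (Fm.box (n+1) A)
def axK (F : Fm) : Prop := ∃ A B n, Linf (Fm.box n (A.imp B)) ∧
    F = (Fm.box n (A.imp B)).imp ((Fm.box n A).imp (Fm.box n B))
def axFour (F : Fm) : Prop := ∃ A n, Linf (Fm.box n A) ∧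
    F = (Fm.box n A).imp (Fm.box (n+1) (Fm.box n A))
def axD (F : Fm) : Prop := ∃ n, F = Fm.neg (Fm.box n Fm.bot)
def axT (F : Fm) : Prop := ∃ A n, Linf (Fm.box n A) ∧ F = (Fm.box n A).imp A
def axL (F : Fm) : Prop := ∃ A n, Linf (Fm.box n A) ∧
    F = (Fm.box (n+1) ((Fm.box n A).imp A)).imp (Fm.box n A)
def axFive (F : Fm) : Prop := ∃ A n, Linf (Fm.box n A) ∧
    F = ((Fm.box n A).neg).imp (Fm.box (n+1) ((Fm.box n A).neg))

/-- Hilbert-style provability over `L∞` from a set of axiom (schema instances):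
    classical tautologies, modus ponens, and necessitation restricted to `n > r(A)`. -/
inductive Prv (Ax : Fm → Prop) : Fm → Prop
  | ax {A : Fm} : Ax A → Prv Ax A
  | taut {A : Fm} : Linf A → Taut A → Prv Ax A
  | mp {A B : Fm} : Prv Ax (A.imp B) → Prv Ax A → Prv Ax B
  | nec {A : Fm} (n : ℕ) : Prv Ax A → BoxLt A n → Prv Ax (Fm.box n A)

def K4hAx (F : Fm) : Prop := axH F ∨ axK F ∨ axFour F
def KD4hAx (F : Fm) : Prop := K4hAx F ∨ axD F
def S4hAx (F : Fm) : Prop := K4hAx F ∨ axT F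
def GLhAx (F : Fm) : Prop := K4hAx F ∨ axL F
def KD45hAx (F : Fm) : Prop := KD4hAx F ∨ axFive F

def K4h : Fm → Prop := Prv K4hAx
def KD4h : Fm → Prop := Prv KD4hAx
def S4h : Fm → Prop := Prv S4hAx
def GLh : Fm → Prop := Prv GLhAx

def conjList (l : List Fm) : Fm := l.foldr Fm.and Fm.top
def disjList (l : List Fm) : Fm := l.foldr Fm.or Fm.bot

/-- `Γ ⊢_L A` : some finite conjunction of members of `Γ` implies `A` in `L`. -/
def Deriv (Ax : Fm → Prop) (Γ : Set Fm) (A : Fm) : Prop :=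
  ∃ l : List Fm, (∀ B ∈ l, B ∈ Γ) ∧ Prv Ax ((conjList l).imp A)

/-- Ordinary unimodal formulas over the original atoms together with
    fresh atoms `q n`. -/
inductive MFm : Type
  | atom : ℕ → MFm
  | q : ℕ → MFm
  | bot : MFm
  | and : MFm → MFm → MFm
  | or : MFm → MFm → MFm
  | imp : MFm → MFm → MFm
  | neg : MFm → MFm
  | box : MFm → MFm
  deriving DecidableEq

def mevalWith (v : MFm → Bool) : MFm → Bool
  | .atom k => v (.atom k)
  | .q k => v (.q k)
  | .bot => false
  | .and A B => mevalWith v A && mevalWith v B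
  | .or A B => mevalWith v A || mevalWith v B
  | .imp A B => !(mevalWith v A) || mevalWith v B
  | .neg A => !(mevalWith v A)
  | .box A => v (.box A)

def MTaut (A : MFm) : Prop := ∀ v, mevalWith v A = true

/-- Ordinary unimodal `K4` over the language including the atoms `q`. -/
inductive K4Q : MFm → Prop
  | taut {A} : MTaut A → K4Q A
  | axK (A B : MFm) : K4Q ((MFm.box (A.imp B)).imp ((MFm.box A).imp (MFm.box B)))
  | axFour (A : MFm) : K4Q ((MFm.box A).imp (MFm.box (MFm.box A)))
  | mp {A B} : K4Q (A.imp B) → K4Q A → K4Q B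
  | nec {A} : K4Q A → K4Q (MFm.box A)

/-- Ordinary unimodal `S4` over the language including the atoms `q`. -/
inductive S4Q : MFm → Prop
  | taut {A} : MTaut A → S4Q A
  | axK (A B : MFm) : S4Q ((MFm.box (A.imp B)).imp ((MFm.box A).imp (MFm.box B)))
  | axFour (A : MFm) : S4Q ((MFm.box A).imp (MFm.box (MFm.box A)))
  | axT (A : MFm) : S4Q ((MFm.box A).imp A)
  | mp {A B} : S4Q (A.imp B) → S4Q A → S4Q B
  | nec {A} : S4Q A → S4Q (MFm.box A)

/-- `q_0 ∧ ⋯ ∧ q_n`. -/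
def qconj : ℕ → MFm
  | 0 => MFm.q 0
  | n+1 => (qconj n).and (MFm.q (n+1))

/-- The translation `t`: `(□n A)^t = □(q_0 ∧ ⋯ ∧ q_n → A^t)`. -/
def trT : Fm → MFm
  | .atom k => .atom k
  | .bot => .bot
  | .and A B => (trT A).and (trT B)
  | .or A B => (trT A).or (trT B)
  | .imp A B => (trT A).imp (trT B)
  | .neg A => (trT A).neg
  | .box n A => MFm.box ((qconj n).imp (trT A))

def conjM (l : List MFm) : MFm := l.foldr MFm.and (MFm.neg MFm.bot)

/-- `Γ ⊢_L A` for a unimodal system `L`. -/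
def DerivM (P : MFm → Prop) (Γ : Set MFm) (A : MFm) : Prop :=
  ∃ l : List MFm, (∀ B ∈ l, B ∈ Γ) ∧ P ((conjM l).imp A)

section CompletenessProof

open Classical

abbrev Pr (A : Fm) : Prop := Prv S4hAx A

/- ### Linf / BoxLt basics -/

lemma linf_top : Linf Fm.top := Linf.neg Linf.bot

lemma linf_and_l {A B} (h : Linf (Fm.and A B)) : Linf A := by cases h; assumption
lemma linf_and_r {A B} (h : Linf (Fm.and A B)) : Linf B := by cases h; assumption
lemma linf_or_l {A B} (h : Linf (Fm.or A B)) : Linf A := by cases h; assumption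
lemma linf_or_r {A B} (h : Linf (Fm.or A B)) : Linf B := by cases h; assumption
lemma linf_imp_l {A B} (h : Linf (Fm.imp A B)) : Linf A := by cases h; assumption
lemma linf_imp_r {A B} (h : Linf (Fm.imp A B)) : Linf B := by cases h; assumption
lemma linf_neg_inv {A} (h : Linf (Fm.neg A)) : Linf A := by cases h; assumption
lemma linf_box_inv {n A} (h : Linf (Fm.box n A)) : Linf A := by cases h; assumption
lemma boxlt_box_inv {n A} (h : Linf (Fm.box n A)) : BoxLt A n := by cases h; assumption

lemma boxlt_top {n} : BoxLt Fm.top n := fun _ h => False.elim h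
lemma boxlt_mono {A n m} (h : BoxLt A n) (hnm : n ≤ m) : BoxLt A m :=
  fun i hi => lt_of_lt_of_le (h i hi) hnm
lemma boxlt_imp {A B n} (hA : BoxLt A n) (hB : BoxLt B n) : BoxLt (Fm.imp A B) n :=
  fun i hi => hi.elim (hA i) (hB i)
lemma boxlt_neg {A n} (hA : BoxLt A n) : BoxLt (Fm.neg A) n := fun i hi => hA i hi
lemma boxlt_box_succ {A n} (h : BoxLt A n) : BoxLt (Fm.box n A) (n + 1) := by
  rintro i (rfl | hi)
  · exact Nat.lt_succ_self _
  · exact lt_trans (h i hi) (Nat.lt_succ_self n)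

lemma conj_cons (C : Fm) (l : List Fm) : conjList (C :: l) = Fm.and C (conjList l) := rfl
lemma conj_nil : conjList [] = Fm.top := rfl

lemma linf_conj {l : List Fm} (h : ∀ C ∈ l, Linf C) : Linf (conjList l) := by
  induction l with
  | nil => exact linf_top
  | cons C t ih =>
    exact Linf.and (h C (by simp)) (ih fun D hD => h D (by simp [hD]))

lemma boxlt_conj {l : List Fm} {n} (h : ∀ C ∈ l, BoxLt C n) : BoxLt (conjList l) n := by
  induction l with
  | nil => exact boxlt_top
  | cons C t ih =>
    have h1 : BoxLt C n := h C (by simp)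
    have h2 : BoxLt (conjList t) n := ih fun D hD => h D (by simp [hD])
    exact fun i hi => hi.elim (h1 i) (h2 i)

/- ### eval simp lemmas -/

lemma eval_and {v A B} : evalWith v (Fm.and A B) = (evalWith v A && evalWith v B) := rfl
lemma eval_or {v A B} : evalWith v (Fm.or A B) = (evalWith v A || evalWith v B) := rfl
lemma eval_imp {v A B} : evalWith v (Fm.imp A B) = (!(evalWith v A) || evalWith v B) := rfl
lemma eval_neg {v A} : evalWith v (Fm.neg A) = !(evalWith v A) := rfl
lemma eval_bot {v} : evalWith v Fm.bot = false := rfl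
lemma eval_top {v} : evalWith v Fm.top = true := rfl

lemma eval_conj {v : Fm → Bool} {l : List Fm} :
    evalWith v (conjList l) = true ↔ ∀ C ∈ l, evalWith v C = true := by
  induction l with
  | nil =>
    show (true : Bool) = true ↔ _
    simp
  | cons C t ih =>
    show (evalWith v C && evalWith v (conjList t)) = true ↔ _
    rw [Bool.and_eq_true, ih, List.forall_mem_cons]

lemma eval_conj_append {v : Fm → Bool} {l1 l2 : List Fm} :
    evalWith v (conjList (l1 ++ l2)) =
      (evalWith v (conjList l1) && evalWith v (conjList l2)) := by
  induction l1 with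
  | nil =>
    show evalWith v (conjList l2) = (true && evalWith v (conjList l2))
    rw [Bool.true_and]
  | cons C t ih =>
    show (evalWith v C && evalWith v (conjList (t ++ l2)))
        = ((evalWith v C && evalWith v (conjList t)) && evalWith v (conjList l2))
    rw [ih, Bool.and_assoc]

/- ### derived Prv rules -/

lemma prv_imp_trans {A B C : Fm} (hA : Linf A) (hB : Linf B) (hC : Linf C)
    (h1 : Pr (A.imp B)) (h2 : Pr (B.imp C)) : Pr (A.imp C) := by
  have t : Taut ((A.imp B).imp ((B.imp C).imp (A.imp C))) := by
    intro v
    simp only [eval_imp]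
    cases evalWith v A <;> cases evalWith v B <;> cases evalWith v C <;> rfl
  exact Prv.mp (Prv.mp (Prv.taut
    (Linf.imp (Linf.imp hA hB) (Linf.imp (Linf.imp hB hC) (Linf.imp hA hC))) t) h1) h2

lemma prv_conj_mono {l l' : List Fm} (hsub : ∀ C ∈ l, C ∈ l')
    (hl' : ∀ C ∈ l', Linf C) (hl : ∀ C ∈ l, Linf C) :
    Pr ((conjList l').imp (conjList l)) := by
  refine Prv.taut (Linf.imp (linf_conj hl') (linf_conj hl)) ?_
  intro v
  rw [eval_imp]
  cases h : evalWith v (conjList l') with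
  | false => rfl
  | true =>
    have : evalWith v (conjList l) = true :=
      eval_conj.mpr fun C hC => eval_conj.mp h C (hsub C hC)
    rw [this]
    rfl

lemma prv_bot_mono {l l' : List Fm} (hsub : ∀ C ∈ l, C ∈ l')
    (hl' : ∀ C ∈ l', Linf C) (hl : ∀ C ∈ l, Linf C)
    (h : Pr ((conjList l).imp Fm.bot)) : Pr ((conjList l').imp Fm.bot) :=
  prv_imp_trans (linf_conj hl') (linf_conj hl) Linf.bot (prv_conj_mono hsub hl' hl) h

lemma prv_discharge0 {D B : Fm} (hB : Linf B) (hD : Linf D)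
    (h : Pr (((Fm.neg B).and D).imp Fm.bot)) : Pr (D.imp B) := by
  have t1 : Taut ((((Fm.neg B).and D).imp Fm.bot).imp (D.imp B)) := by
    intro v
    simp only [eval_imp, eval_and, eval_neg, eval_bot]
    cases evalWith v B <;> cases evalWith v D <;> rfl
  exact Prv.mp (Prv.taut (Linf.imp (Linf.imp (Linf.and (Linf.neg hB) hD) Linf.bot)
    (Linf.imp hD hB)) t1) h

lemma prv_discharge {t : List Fm} {B : Fm} (hB : Linf B) (ht : ∀ C ∈ t, Linf C)
    (h : Pr ((conjList (Fm.neg B :: t)).imp Fm.bot)) : Pr ((conjList t).imp B) :=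
  prv_discharge0 hB (linf_conj ht) h

lemma prv_combine0 {x1 x2 y B : Fm} (hB : Linf B) (hx1 : Linf x1) (hx2 : Linf x2)
    (hy : Linf y)
    (h1 : Pr ((B.and x1).imp Fm.bot)) (h2 : Pr (((Fm.neg B).and x2).imp Fm.bot))
    (e1 : Pr (y.imp x1)) (e2 : Pr (y.imp x2)) : Pr (y.imp Fm.bot) := by
  have t : Taut (((B.and x1).imp Fm.bot).imp ((((Fm.neg B).and x2).imp Fm.bot).imp
      ((y.imp x1).imp ((y.imp x2).imp (y.imp Fm.bot))))) := by
    intro v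
    simp only [eval_imp, eval_and, eval_neg, eval_bot]
    cases evalWith v B <;> cases evalWith v x1 <;> cases evalWith v x2 <;>
      cases evalWith v y <;> rfl
  have hLt : Linf (((B.and x1).imp Fm.bot).imp ((((Fm.neg B).and x2).imp Fm.bot).imp
      ((y.imp x1).imp ((y.imp x2).imp (y.imp Fm.bot))))) :=
    Linf.imp (Linf.imp (Linf.and hB hx1) Linf.bot)
      (Linf.imp (Linf.imp (Linf.and (Linf.neg hB) hx2) Linf.bot)
        (Linf.imp (Linf.imp hy hx1)
          (Linf.imp (Linf.imp hy hx2) (Linf.imp hy Linf.bot))))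
  exact Prv.mp (Prv.mp (Prv.mp (Prv.mp (Prv.taut hLt t) h1) h2) e1) e2

lemma prv_combine {l1 l2 : List Fm} {B : Fm} (hB : Linf B)
    (h1l : ∀ C ∈ l1, Linf C) (h2l : ∀ C ∈ l2, Linf C)
    (h1 : Pr ((conjList (B :: l1)).imp Fm.bot))
    (h2 : Pr ((conjList (Fm.neg B :: l2)).imp Fm.bot)) :
    Pr ((conjList (l1 ++ l2)).imp Fm.bot) := by
  have h12l : ∀ C ∈ l1 ++ l2, Linf C := by
    intro C hC
    rcases List.mem_append.mp hC with hC | hC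
    exacts [h1l C hC, h2l C hC]
  have e1 : Pr ((conjList (l1 ++ l2)).imp (conjList l1)) :=
    prv_conj_mono (fun C hC => List.mem_append.mpr (Or.inl hC)) h12l h1l
  have e2 : Pr ((conjList (l1 ++ l2)).imp (conjList l2)) :=
    prv_conj_mono (fun C hC => List.mem_append.mpr (Or.inr hC)) h12l h2l
  exact prv_combine0 hB (linf_conj h1l) (linf_conj h2l) (linf_conj h12l) h1 h2 e1 e2

/- ### maximal consistent sets -/

structure MCS (X : Set Fm) : Prop where
  sub : ∀ B ∈ X, Linf B
  con : ∀ l : List Fm, (∀ B ∈ l, B ∈ X) → ¬ Pr ((conjList l).imp Fm.bot)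
  max : ∀ B, Linf B → B ∈ X ∨ Fm.neg B ∈ X

namespace MCS

lemma not_both {X : Set Fm} (hX : MCS X) {B} (h1 : B ∈ X) (h2 : Fm.neg B ∈ X) :
    False := by
  have hB := hX.sub B h1
  refine hX.con [B, Fm.neg B] ?_ ?_
  · intro C hC
    rcases List.mem_cons.mp hC with rfl | hC
    · exact h1
    · rcases List.mem_cons.mp hC with rfl | hC
      · exact h2
      · cases hC
  · refine Prv.taut (Linf.imp (Linf.and hB (Linf.and (Linf.neg hB) linf_top)) Linf.bot) ?_
    intro v
    simp only [conj_cons, conj_nil, eval_imp, eval_and, eval_neg, eval_bot, eval_top]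
    cases evalWith v B <;> rfl

lemma mem_of_prv {X : Set Fm} (hX : MCS X) {B} (hB : Linf B) (h : Pr B) : B ∈ X := by
  rcases hX.max B hB with h' | h'
  · exact h'
  · exfalso
    refine hX.con [Fm.neg B] ?_ ?_
    · intro C hC
      rcases List.mem_cons.mp hC with rfl | hC
      · exact h'
      · cases hC
    · refine Prv.mp (Prv.taut (Linf.imp hB
        (Linf.imp (Linf.and (Linf.neg hB) linf_top) Linf.bot)) ?_) h
      intro v
      simp only [conj_cons, conj_nil, eval_imp, eval_and, eval_neg, eval_bot, eval_top]
      cases evalWith v B <;> rfl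

lemma mp_mem {X : Set Fm} (hX : MCS X) {B C} (h1 : B ∈ X) (h2 : Fm.imp B C ∈ X) :
    C ∈ X := by
  have hBC := hX.sub _ h2
  have hB := linf_imp_l hBC
  have hC := linf_imp_r hBC
  rcases hX.max C hC with h | h
  · exact h
  · exfalso
    refine hX.con [B, Fm.imp B C, Fm.neg C] ?_ ?_
    · intro D hD
      rcases List.mem_cons.mp hD with rfl | hD
      · exact h1
      · rcases List.mem_cons.mp hD with rfl | hD
        · exact h2
        · rcases List.mem_cons.mp hD with rfl | hD
          · exact h
          · cases hD
    · refine Prv.taut (Linf.imp (Linf.and hB (Linf.and hBC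
        (Linf.and (Linf.neg hC) linf_top))) Linf.bot) ?_
      intro v
      simp only [conj_cons, conj_nil, eval_imp, eval_and, eval_neg, eval_bot, eval_top]
      cases evalWith v B <;> cases evalWith v C <;> rfl

lemma bot_not_mem {X : Set Fm} (hX : MCS X) : Fm.bot ∉ X := by
  intro h
  refine hX.con [Fm.bot] ?_ ?_
  · intro C hC
    rcases List.mem_cons.mp hC with rfl | hC
    · exact h
    · cases hC
  · refine Prv.taut (Linf.imp (Linf.and Linf.bot linf_top) Linf.bot) ?_
    intro v; rfl

lemma neg_mem {X : Set Fm} (hX : MCS X) {B} (hB : Linf B) :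
    Fm.neg B ∈ X ↔ B ∉ X :=
  ⟨fun h hB' => hX.not_both hB' h, fun h => (hX.max B hB).resolve_left h⟩

lemma and_mem {X : Set Fm} (hX : MCS X) {A B} (hA : Linf A) (hB : Linf B) :
    Fm.and A B ∈ X ↔ (A ∈ X ∧ B ∈ X) := by
  constructor
  · intro h
    constructor
    · refine hX.mp_mem h (hX.mem_of_prv (Linf.imp (Linf.and hA hB) hA) ?_)
      refine Prv.taut (Linf.imp (Linf.and hA hB) hA) ?_
      intro v; simp only [eval_imp, eval_and]
      cases evalWith v A <;> cases evalWith v B <;> rfl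
    · refine hX.mp_mem h (hX.mem_of_prv (Linf.imp (Linf.and hA hB) hB) ?_)
      refine Prv.taut (Linf.imp (Linf.and hA hB) hB) ?_
      intro v; simp only [eval_imp, eval_and]
      cases evalWith v A <;> cases evalWith v B <;> rfl
  · rintro ⟨h1, h2⟩
    have himp : Pr (A.imp (B.imp (Fm.and A B))) := by
      refine Prv.taut (Linf.imp hA (Linf.imp hB (Linf.and hA hB))) ?_
      intro v; simp only [eval_imp, eval_and]
      cases evalWith v A <;> cases evalWith v B <;> rfl
    exact hX.mp_mem h2 (hX.mp_mem h1
      (hX.mem_of_prv (Linf.imp hA (Linf.imp hB (Linf.and hA hB))) himp))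

lemma or_mem {X : Set Fm} (hX : MCS X) {A B} (hA : Linf A) (hB : Linf B) :
    Fm.or A B ∈ X ↔ (A ∈ X ∨ B ∈ X) := by
  constructor
  · intro h
    by_contra hc
    push_neg at hc
    have hnA : Fm.neg A ∈ X := (hX.neg_mem hA).mpr hc.1
    have hnB : Fm.neg B ∈ X := (hX.neg_mem hB).mpr hc.2
    refine hX.con [Fm.or A B, Fm.neg A, Fm.neg B] ?_ ?_
    · intro D hD
      rcases List.mem_cons.mp hD with rfl | hD
      · exact h
      · rcases List.mem_cons.mp hD with rfl | hD
        · exact hnA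
        · rcases List.mem_cons.mp hD with rfl | hD
          · exact hnB
          · cases hD
    · refine Prv.taut (Linf.imp (Linf.and (Linf.or hA hB) (Linf.and (Linf.neg hA)
        (Linf.and (Linf.neg hB) linf_top))) Linf.bot) ?_
      intro v
      simp only [conj_cons, conj_nil, eval_imp, eval_and, eval_or, eval_neg,
        eval_bot, eval_top]
      cases evalWith v A <;> cases evalWith v B <;> rfl
  · intro h
    rcases h with h | h
    · refine hX.mp_mem h (hX.mem_of_prv (Linf.imp hA (Linf.or hA hB)) ?_)
      refine Prv.taut (Linf.imp hA (Linf.or hA hB)) ?_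
      intro v; simp only [eval_imp, eval_or]
      cases evalWith v A <;> cases evalWith v B <;> rfl
    · refine hX.mp_mem h (hX.mem_of_prv (Linf.imp hB (Linf.or hA hB)) ?_)
      refine Prv.taut (Linf.imp hB (Linf.or hA hB)) ?_
      intro v; simp only [eval_imp, eval_or]
      cases evalWith v A <;> cases evalWith v B <;> rfl

lemma imp_mem {X : Set Fm} (hX : MCS X) {A B} (hA : Linf A) (hB : Linf B) :
    Fm.imp A B ∈ X ↔ (A ∈ X → B ∈ X) := by
  constructor
  · intro h hA'
    exact hX.mp_mem hA' h
  · intro h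
    by_cases hA' : A ∈ X
    · have hB' := h hA'
      refine hX.mp_mem hB' (hX.mem_of_prv (Linf.imp hB (Linf.imp hA hB)) ?_)
      refine Prv.taut (Linf.imp hB (Linf.imp hA hB)) ?_
      intro v; simp only [eval_imp]
      cases evalWith v A <;> cases evalWith v B <;> rfl
    · have hnA : Fm.neg A ∈ X := (hX.neg_mem hA).mpr hA'
      refine hX.mp_mem hnA (hX.mem_of_prv
        (Linf.imp (Linf.neg hA) (Linf.imp hA hB)) ?_)
      refine Prv.taut (Linf.imp (Linf.neg hA) (Linf.imp hA hB)) ?_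
      intro v; simp only [eval_imp, eval_neg]
      cases evalWith v A <;> cases evalWith v B <;> rfl

end MCS

/- ### canonical box facts -/

def Rc (n : ℕ) (X Y : Set Fm) : Prop := ∀ D, Fm.box n D ∈ X → D ∈ Y

namespace MCS

lemma unbox_mem {X : Set Fm} (hX : MCS X) {n A} (h : Fm.box n A ∈ X) : A ∈ X := by
  have hbox := hX.sub _ h
  have hA := linf_box_inv hbox
  exact hX.mp_mem h (hX.mem_of_prv (Linf.imp hbox hA)
    (Prv.ax (Or.inr ⟨A, n, hbox, rfl⟩)))

lemma boxH_mem {X : Set Fm} (hX : MCS X) {n A} (h : Fm.box n A ∈ X) : Fm.box (n + 1) A ∈ X := by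
  have hbox := hX.sub _ h
  have hA := linf_box_inv hbox
  have hlt := boxlt_box_inv hbox
  have hbox' : Linf (Fm.box (n + 1) A) :=
    Linf.box (n + 1) hA (boxlt_mono hlt (Nat.le_succ n))
  exact hX.mp_mem h (hX.mem_of_prv (Linf.imp hbox hbox')
    (Prv.ax (Or.inl (Or.inl ⟨A, n, hbox, rfl⟩))))

lemma box_lift {X : Set Fm} (hX : MCS X) {n A} (h : Fm.box n A ∈ X) {m} (hm : n ≤ m) : Fm.box m A ∈ X := by
  induction m, hm using Nat.le_induction with
  | base => exact h
  | succ m _ ih => exact hX.boxH_mem ih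

lemma box4_mem {X : Set Fm} (hX : MCS X) {n A} (h : Fm.box n A ∈ X) : Fm.box (n + 1) (Fm.box n A) ∈ X := by
  have hbox := hX.sub _ h
  have hlt := boxlt_box_inv hbox
  have hbox' : Linf (Fm.box (n + 1) (Fm.box n A)) :=
    Linf.box (n + 1) hbox (boxlt_box_succ hlt)
  exact hX.mp_mem h (hX.mem_of_prv (Linf.imp hbox hbox')
    (Prv.ax (Or.inl (Or.inr (Or.inr ⟨A, n, hbox, rfl⟩)))))

end MCS

lemma rc_unbox {X Y : Set Fm} (hX : MCS X) (hY : MCS Y) {j n : ℕ} {A : Fm}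
    (hnj : n ≤ j) (hR : Rc j X Y) (h : Fm.box n A ∈ X) : A ∈ Y := by
  rcases eq_or_lt_of_le hnj with rfl | hlt
  · exact hR A h
  · have h4 : Fm.box (n + 1) (Fm.box n A) ∈ X := hX.box4_mem h
    have hj : Fm.box j (Fm.box n A) ∈ X := hX.box_lift h4 hlt
    exact hY.unbox_mem (hR _ hj)

lemma rc_comp {X Y Z : Set Fm} (hX : MCS X) {j k : ℕ} (hjk : k < j)
    (h1 : Rc j X Y) (h2 : Rc k Y Z) : Rc k X Z := by
  intro D hD
  have h4 : Fm.box (k + 1) (Fm.box k D) ∈ X := hX.box4_mem hD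
  have hj : Fm.box j (Fm.box k D) ∈ X := hX.box_lift h4 hjk
  exact h2 D (h1 _ hj)

/- ### Lindenbaum -/

lemma chain_list {c : Set (Set Fm)} (hchain : IsChain (· ⊆ ·) c) (hne : c.Nonempty) :
    ∀ l : List Fm, (∀ B ∈ l, B ∈ ⋃₀ c) → ∃ Y ∈ c, ∀ B ∈ l, B ∈ Y := by
  intro l
  induction l with
  | nil =>
    intro _
    obtain ⟨Y, hY⟩ := hne
    exact ⟨Y, hY, by simp⟩
  | cons B t ih =>
    intro hl
    obtain ⟨Y, hYc, hYt⟩ := ih fun C hC => hl C (List.mem_cons_of_mem _ hC)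
    obtain ⟨Z, hZc, hBZ⟩ := hl B (by simp)
    rcases eq_or_ne Y Z with rfl | hne'
    · refine ⟨Y, hYc, ?_⟩
      intro C hC
      rcases List.mem_cons.mp hC with rfl | hC
      exacts [hBZ, hYt C hC]
    · rcases hchain hYc hZc hne' with h | h
      · refine ⟨Z, hZc, ?_⟩
        intro C hC
        rcases List.mem_cons.mp hC with rfl | hC
        exacts [hBZ, h (hYt C hC)]
      · refine ⟨Y, hYc, ?_⟩
        intro C hC
        rcases List.mem_cons.mp hC with rfl | hC
        exacts [h hBZ, hYt C hC]

lemma lindenbaum {X₀ : Set Fm} (h1 : ∀ B ∈ X₀, Linf B)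
    (h2 : ∀ l : List Fm, (∀ B ∈ l, B ∈ X₀) → ¬ Pr ((conjList l).imp Fm.bot)) :
    ∃ X, MCS X ∧ X₀ ⊆ X := by
  set S : Set (Set Fm) :=
    {Y | (∀ B ∈ Y, Linf B) ∧
      ∀ l : List Fm, (∀ B ∈ l, B ∈ Y) → ¬ Pr ((conjList l).imp Fm.bot)} with hS
  have hchainub : ∀ c ⊆ S, IsChain (· ⊆ ·) c → c.Nonempty →
      ∃ ub ∈ S, ∀ s ∈ c, s ⊆ ub := by
    intro c hc hchain hne
    refine ⟨⋃₀ c, ⟨?_, ?_⟩, fun s hs => Set.subset_sUnion_of_mem hs⟩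
    · rintro B ⟨Y, hY, hBY⟩
      exact (hc hY).1 B hBY
    · intro l hl hPr
      obtain ⟨Y, hYc, hall⟩ := chain_list hchain hne l hl
      exact (hc hYc).2 l hall hPr
  obtain ⟨M, hXM, hMmax⟩ := zorn_subset_nonempty S hchainub X₀ ⟨h1, h2⟩
  obtain ⟨hMS1, hMS2⟩ := hMmax.prop
  -- key : any Linf formula not in M yields a refutation
  have key : ∀ E, Linf E → E ∉ M →
      ∃ lE : List Fm, (∀ C ∈ lE, C ∈ M) ∧ Pr ((conjList (E :: lE)).imp Fm.bot) := by
    intro E hE hEM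
    by_contra hno
    push_neg at hno
    have hIns : insert E M ∈ S := by
      constructor
      · rintro B hB
        rcases Set.mem_insert_iff.mp hB with rfl | hB
        · exact hE
        · exact hMS1 B hB
      · intro l hl hPr
        set lf := l.filter (fun C => decide (C ≠ E)) with hlf
        have hlfM : ∀ C ∈ lf, C ∈ M := by
          intro C hC
          have h' := List.mem_filter.mp hC
          have hne : C ≠ E := of_decide_eq_true h'.2
          rcases Set.mem_insert_iff.mp (hl C h'.1) with rfl | h
          · exact absurd rfl hne
          · exact h
        have hsubl : ∀ C ∈ l, C ∈ E :: lf := by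
          intro C hC
          by_cases hCE : C = E
          · exact hCE ▸ List.mem_cons_self
          · exact List.mem_cons_of_mem _
              (List.mem_filter.mpr ⟨hC, decide_eq_true hCE⟩)
        have hlinfl : ∀ C ∈ l, Linf C := by
          intro C hC
          rcases Set.mem_insert_iff.mp (hl C hC) with rfl | h
          · exact hE
          · exact hMS1 C h
        have hlinfEl : ∀ C ∈ E :: lf, Linf C := by
          intro C hC
          rcases List.mem_cons.mp hC with rfl | hC
          · exact hE
          · exact hMS1 C (hlfM C hC)
        have hPr' : Pr ((conjList (E :: lf)).imp Fm.bot) :=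
          prv_bot_mono hsubl hlinfEl hlinfl hPr
        exact hno lf hlfM hPr'
    have hMeq : M = insert E M := hMmax.eq_of_subset hIns (Set.subset_insert E M)
    exact hEM (by rw [hMeq]; exact Set.mem_insert E M)
  refine ⟨M, ⟨hMS1, hMS2, ?_⟩, hXM⟩
  intro B hB
  by_contra hc
  push_neg at hc
  obtain ⟨l1, hl1, hp1⟩ := key B hB hc.1
  obtain ⟨l2, hl2, hp2⟩ := key (Fm.neg B) (Linf.neg hB) hc.2
  refine hMS2 (l1 ++ l2) ?_ ?_
  · intro C hC
    rcases List.mem_append.mp hC with hC | hC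
    exacts [hl1 C hC, hl2 C hC]
  · exact prv_combine hB (fun C hC => hMS1 C (hl1 C hC))
      (fun C hC => hMS1 C (hl2 C hC)) hp1 hp2

/- ### boxed conjunctions and the existence lemma -/

lemma taut_top : Taut Fm.top := fun _ => rfl

lemma box_conj_mem {X : Set Fm} (hX : MCS X) (n : ℕ) :
    ∀ l : List Fm, (∀ C ∈ l, Fm.box n C ∈ X) → Fm.box n (conjList l) ∈ X := by
  intro l
  induction l with
  | nil =>
    intro _
    exact hX.mem_of_prv (Linf.box n linf_top boxlt_top)
      (Prv.nec n (Prv.taut linf_top taut_top) boxlt_top)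
  | cons C t ih =>
    intro hmem
    have hC : Fm.box n C ∈ X := hmem C (by simp)
    have ht : Fm.box n (conjList t) ∈ X := ih fun D hD => hmem D (by simp [hD])
    have hCb := hX.sub _ hC
    have hCL : Linf C := linf_box_inv hCb
    have hClt : BoxLt C n := boxlt_box_inv hCb
    have hTb := hX.sub _ ht
    have hTL : Linf (conjList t) := linf_box_inv hTb
    have hTlt : BoxLt (conjList t) n := boxlt_box_inv hTb
    have hAndL : Linf (Fm.and C (conjList t)) := Linf.and hCL hTL
    have hAndlt : BoxLt (Fm.and C (conjList t)) n := fun i hi => hi.elim (hClt i) (hTlt i)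
    -- box n (C → (conj t → C ∧ conj t)) is provable
    have himp : Linf (C.imp ((conjList t).imp (Fm.and C (conjList t)))) :=
      Linf.imp hCL (Linf.imp hTL hAndL)
    have h0 : Pr (Fm.box n (C.imp ((conjList t).imp (Fm.and C (conjList t))))) := by
      refine Prv.nec n (Prv.taut himp ?_) ?_
      · intro v; simp only [evalWith]
        cases evalWith v C <;> cases evalWith v (conjList t) <;> rfl
      · exact boxlt_imp hClt (boxlt_imp hTlt hAndlt)
    have hboximp : Linf (Fm.box n (C.imp ((conjList t).imp (Fm.and C (conjList t))))) :=
      Linf.box n himp (boxlt_imp hClt (boxlt_imp hTlt hAndlt))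
    -- K to peel off C
    have hK1 : Pr ((Fm.box n (C.imp ((conjList t).imp (Fm.and C (conjList t))))).imp
        ((Fm.box n C).imp (Fm.box n ((conjList t).imp (Fm.and C (conjList t)))))) :=
      Prv.ax (Or.inl (Or.inr (Or.inl ⟨C, (conjList t).imp (Fm.and C (conjList t)), n,
        hboximp, rfl⟩)))
    have hm1 : Fm.box n ((conjList t).imp (Fm.and C (conjList t))) ∈ X := by
      refine hX.mp_mem hC (hX.mem_of_prv ?_ (Prv.mp hK1 h0))
      exact Linf.imp (Linf.box n hCL hClt)
        (Linf.box n (Linf.imp hTL hAndL) (boxlt_imp hTlt hAndlt))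
    have hK2 : Pr ((Fm.box n ((conjList t).imp (Fm.and C (conjList t)))).imp
        ((Fm.box n (conjList t)).imp (Fm.box n (Fm.and C (conjList t))))) :=
      Prv.ax (Or.inl (Or.inr (Or.inl ⟨conjList t, Fm.and C (conjList t), n,
        Linf.box n (Linf.imp hTL hAndL) (boxlt_imp hTlt hAndlt), rfl⟩)))
    have hm2 : Fm.box n (Fm.and C (conjList t)) ∈ X := by
      refine hX.mp_mem ht (hX.mp_mem hm1 (hX.mem_of_prv ?_ hK2))
      exact Linf.imp (Linf.box n (Linf.imp hTL hAndL) (boxlt_imp hTlt hAndlt))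
        (Linf.imp (Linf.box n hTL hTlt) (Linf.box n hAndL hAndlt))
    exact hm2

lemma existence {X : Set Fm} (hX : MCS X) {n : ℕ} {B : Fm}
    (hlB : Linf B) (hBn : BoxLt B n) (hnot : Fm.box n B ∉ X) :
    ∃ Y, MCS Y ∧ Rc n X Y ∧ B ∉ Y := by
  set S : Set Fm := insert (Fm.neg B) {D | Fm.box n D ∈ X} with hS
  have hSlinf : ∀ C ∈ S, Linf C := by
    rintro C hC
    rcases Set.mem_insert_iff.mp hC with rfl | h
    · exact Linf.neg hlB
    · exact linf_box_inv (hX.sub _ h)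
  have hScon : ∀ l : List Fm, (∀ C ∈ l, C ∈ S) → ¬ Pr ((conjList l).imp Fm.bot) := by
    intro l hl hPr
    set lf := l.filter (fun C => decide (C ≠ Fm.neg B)) with hlf
    have hlfX : ∀ C ∈ lf, Fm.box n C ∈ X := by
      intro C hC
      have h' := List.mem_filter.mp hC
      have hne : C ≠ Fm.neg B := of_decide_eq_true h'.2
      rcases Set.mem_insert_iff.mp (hl C h'.1) with rfl | h
      · exact absurd rfl hne
      · exact h
    have hlfL : ∀ C ∈ lf, Linf C := fun C hC => linf_box_inv (hX.sub _ (hlfX C hC))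
    have hlflt : ∀ C ∈ lf, BoxLt C n := fun C hC => boxlt_box_inv (hX.sub _ (hlfX C hC))
    have hsub2 : ∀ C ∈ l, C ∈ Fm.neg B :: lf := by
      intro C hC
      by_cases hCB : C = Fm.neg B
      · exact hCB ▸ List.mem_cons_self
      · exact List.mem_cons_of_mem _ (List.mem_filter.mpr ⟨hC, decide_eq_true hCB⟩)
    have hlinfl : ∀ C ∈ l, Linf C := fun C hC => hSlinf C (hl C hC)
    have hlinfEl : ∀ C ∈ Fm.neg B :: lf, Linf C := by
      intro C hC
      rcases List.mem_cons.mp hC with rfl | hC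
      exacts [Linf.neg hlB, hlfL C hC]
    have h2 : Pr ((conjList (Fm.neg B :: lf)).imp Fm.bot) :=
      prv_bot_mono hsub2 hlinfEl hlinfl hPr
    have h3 : Pr ((conjList lf).imp B) := prv_discharge hlB hlfL h2
    have hconjL : Linf (conjList lf) := linf_conj hlfL
    have hconjlt : BoxLt (conjList lf) n := boxlt_conj hlflt
    have h4 : Pr (Fm.box n ((conjList lf).imp B)) :=
      Prv.nec n h3 (boxlt_imp hconjlt hBn)
    have hK : Pr ((Fm.box n ((conjList lf).imp B)).imp
        ((Fm.box n (conjList lf)).imp (Fm.box n B))) :=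
      Prv.ax (Or.inl (Or.inr (Or.inl ⟨conjList lf, B, n,
        Linf.box n (Linf.imp hconjL hlB) (boxlt_imp hconjlt hBn), rfl⟩)))
    have h5 : Pr ((Fm.box n (conjList lf)).imp (Fm.box n B)) := Prv.mp hK h4
    have h6 : Fm.box n (conjList lf) ∈ X := box_conj_mem hX n lf hlfX
    have h7 : Fm.box n B ∈ X := by
      refine hX.mp_mem h6 (hX.mem_of_prv ?_ h5)
      exact Linf.imp (Linf.box n hconjL hconjlt) (Linf.box n hlB hBn)
    exact hnot h7
  obtain ⟨Y, hY, hSY⟩ := lindenbaum hSlinf hScon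
  refine ⟨Y, hY, fun D hD => hSY (Set.mem_insert_of_mem _ hD), fun hBY =>
    hY.not_both hBY (hSY (Set.mem_insert _ _))⟩

/- ### the unimodal model on (MCS, level) pairs -/

def Rp (p q : Set Fm × ℕ) : Prop :=
  p = q ∨ (MCS p.1 ∧ MCS q.1 ∧ q.2 < p.2 ∧ Rc q.2 p.1 q.1)

lemma Rp.refl (p : Set Fm × ℕ) : Rp p p := Or.inl rfl

lemma Rp.trans {p q r : Set Fm × ℕ} (h1 : Rp p q) (h2 : Rp q r) : Rp p r := by
  rcases h1 with rfl | ⟨hp, hq, hlt, hR⟩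
  · exact h2
  rcases h2 with rfl | ⟨hq', hr, hlt', hR'⟩
  · exact Or.inr ⟨hp, hq, hlt, hR⟩
  · exact Or.inr ⟨hp, hr, lt_trans hlt' hlt, rc_comp hp hlt' hR hR'⟩

def msat : MFm → Set Fm × ℕ → Prop
  | .atom k, p => Fm.atom k ∈ p.1
  | .q m, p => m ≤ p.2
  | .bot, _ => False
  | .and A B, p => msat A p ∧ msat B p
  | .or A B, p => msat A p ∨ msat B p
  | .imp A B, p => msat A p → msat B p
  | .neg A, p => ¬ msat A p
  | .box A, p => ∀ q, Rp p q → msat A q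

lemma meval_eq (p : Set Fm × ℕ) :
    ∀ A : MFm, (mevalWith (fun G => decide (msat G p)) A = true) ↔ msat A p := by
  intro A
  induction A with
  | atom k =>
    simp [mevalWith, msat]
    exact decide_eq_true_iff
  | q k =>
    simp [mevalWith, msat]
    exact @decide_eq_true_iff _ (Classical.propDecidable _)
  | bot => simp [mevalWith, msat]
  | and A B ihA ihB => simp [mevalWith, msat, ← ihA, ← ihB]
  | or A B ihA ihB => simp [mevalWith, msat, ← ihA, ← ihB]
  | imp A B ihA ihB =>
    simp only [mevalWith, msat, ← ihA, ← ihB]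
    cases mevalWith (fun G => decide (msat G p)) A <;>
      cases mevalWith (fun G => decide (msat G p)) B <;> simp
  | neg A ihA =>
    simp only [mevalWith, msat, ← ihA]
    cases mevalWith (fun G => decide (msat G p)) A <;> simp
  | box A ihA => simp [mevalWith, msat]

lemma s4q_sound {F : MFm} (h : S4Q F) : ∀ p, msat F p := by
  induction h with
  | taut ht =>
    intro p
    exact (meval_eq p _).mp (ht fun G => decide (msat G p))
  | axK A B =>
    intro p
    show msat (MFm.box (A.imp B)) p → msat (MFm.box A) p → msat (MFm.box B) p
    intro h1 h2 q hq
    exact (h1 q hq) (h2 q hq)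
  | axFour A =>
    intro p
    show msat (MFm.box A) p → msat (MFm.box (MFm.box A)) p
    intro h1 q hq r hr
    exact h1 r (Rp.trans hq hr)
  | axT A =>
    intro p
    show msat (MFm.box A) p → msat A p
    intro h1
    exact h1 p (Rp.refl p)
  | mp _ _ ih1 ih2 =>
    intro p
    exact (ih1 p) (ih2 p)
  | nec _ ih =>
    intro p q hq
    exact ih q

lemma msat_qconj (n : ℕ) (p : Set Fm × ℕ) : msat (qconj n) p ↔ n ≤ p.2 := by
  induction n with
  | zero => simp [qconj, msat]
  | succ n ih =>
    show msat (qconj n) p ∧ (n + 1 ≤ p.2) ↔ n + 1 ≤ p.2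
    rw [ih]
    omega

lemma msat_conjM (l : List MFm) (p : Set Fm × ℕ) :
    msat (conjM l) p ↔ ∀ C ∈ l, msat C p := by
  induction l with
  | nil =>
    show ¬ False ↔ _
    simp
  | cons C t ih =>
    show msat C p ∧ msat (conjM t) p ↔ _
    rw [ih]
    simp

/- ### the truth lemma -/

lemma truth {A : Fm} (hA : Linf A) :
    ∀ (X : Set Fm), MCS X → ∀ i : ℕ, BoxLt A i → (msat (trT A) (X, i) ↔ A ∈ X) := by
  induction hA with
  | atom k =>
    intro X hX i _
    show Fm.atom k ∈ X ↔ Fm.atom k ∈ X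
    rfl
  | bot =>
    intro X hX i _
    exact ⟨fun h => h.elim, fun h => (hX.bot_not_mem h).elim⟩
  | @and A B hA hB ihA ihB =>
    intro X hX i hlt
    show msat (trT A) (X, i) ∧ msat (trT B) (X, i) ↔ _
    rw [ihA X hX i (fun m hm => hlt m (Or.inl hm)),
        ihB X hX i (fun m hm => hlt m (Or.inr hm))]
    exact (hX.and_mem hA hB).symm
  | @or A B hA hB ihA ihB =>
    intro X hX i hlt
    show msat (trT A) (X, i) ∨ msat (trT B) (X, i) ↔ _
    rw [ihA X hX i (fun m hm => hlt m (Or.inl hm)),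
        ihB X hX i (fun m hm => hlt m (Or.inr hm))]
    exact (hX.or_mem hA hB).symm
  | @imp A B hA hB ihA ihB =>
    intro X hX i hlt
    show (msat (trT A) (X, i) → msat (trT B) (X, i)) ↔ _
    rw [ihA X hX i (fun m hm => hlt m (Or.inl hm)),
        ihB X hX i (fun m hm => hlt m (Or.inr hm))]
    exact (hX.imp_mem hA hB).symm
  | @neg A hA ihA =>
    intro X hX i hlt
    show (¬ msat (trT A) (X, i)) ↔ _
    rw [ihA X hX i hlt]
    exact (hX.neg_mem hA).symm
  | @box A n hA hlt ih =>
    intro X hX i hlti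
    have hni : n < i := hlti n (Or.inl rfl)
    show (∀ q, Rp (X, i) q → msat ((qconj n).imp (trT A)) q) ↔ Fm.box n A ∈ X
    constructor
    · intro hm
      by_contra hnot
      obtain ⟨Y, hY, hRc, hBY⟩ := existence hX hA hlt hnot
      have hq : Rp (X, i) (Y, n) := Or.inr ⟨hX, hY, hni, hRc⟩
      have hsat : msat (trT A) (Y, n) := hm (Y, n) hq ((msat_qconj n (Y, n)).mpr le_rfl)
      exact hBY ((ih Y hY n hlt).mp hsat)
    · intro hmem q hq hqc
      obtain ⟨Y, j⟩ := q
      have hn2 : n ≤ j := (msat_qconj n (Y, j)).mp hqc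
      have hYM : MCS Y := by
        rcases hq with heq | ⟨_, h, _, _⟩
        · cases heq; exact hX
        · exact h
      have hmemA : A ∈ Y := by
        rcases hq with heq | ⟨_, hY', _, hRc⟩
        · cases heq; exact hX.unbox_mem hmem
        · exact rc_unbox hX hY' hn2 hRc hmem
      exact (ih Y hYM j (boxlt_mono hlt hn2)).mpr hmemA

/- ### rank -/

def rk : Fm → ℕ
  | .atom _ => 0
  | .bot => 0
  | .and A B => max (rk A) (rk B)
  | .or A B => max (rk A) (rk B)
  | .imp A B => max (rk A) (rk B)
  | .neg A => rk A
  | .box n A => max (n + 1) (rk A)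

lemma boxlt_rk : ∀ A : Fm, BoxLt A (rk A) := by
  intro A
  induction A with
  | atom k => exact fun i h => False.elim h
  | bot => exact fun i h => False.elim h
  | and A B ihA ihB =>
    rintro i (h | h)
    · exact lt_of_lt_of_le (ihA i h) (le_max_left _ _)
    · exact lt_of_lt_of_le (ihB i h) (le_max_right _ _)
  | or A B ihA ihB =>
    rintro i (h | h)
    · exact lt_of_lt_of_le (ihA i h) (le_max_left _ _)
    · exact lt_of_lt_of_le (ihB i h) (le_max_right _ _)
  | imp A B ihA ihB =>
    rintro i (h | h)
    · exact lt_of_lt_of_le (ihA i h) (le_max_left _ _)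
    · exact lt_of_lt_of_le (ihB i h) (le_max_right _ _)
  | neg A ihA => exact fun i h => ihA i h
  | box n A ihA =>
    rintro i (rfl | h)
    · exact lt_of_lt_of_le (Nat.lt_succ_self i) (le_max_left _ _)
    · exact lt_of_lt_of_le (ihA i h) (le_max_right _ _)

lemma rk_le_foldr {C : Fm} : ∀ L : List Fm, C ∈ L →
    rk C ≤ L.foldr (fun D acc => max (rk D) acc) 0 := by
  intro L
  induction L with
  | nil => intro h; cases h
  | cons D t ih =>
    intro h
    rcases List.mem_cons.mp h with rfl | h
    · exact le_max_left _ _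
    · exact le_trans (ih h) (le_max_right _ _)

lemma exists_preimage_list (Γ : Set Fm) :
    ∀ l : List MFm, (∀ C ∈ l, C ∈ trT '' Γ) →
      ∃ lB : List Fm, (∀ B ∈ lB, B ∈ Γ) ∧ lB.map trT = l := by
  intro l
  induction l with
  | nil => exact fun _ => ⟨[], by simp, rfl⟩
  | cons C t ih =>
    intro hl
    obtain ⟨lB, h1, h2⟩ := ih fun D hD => hl D (List.mem_cons_of_mem _ hD)
    obtain ⟨B, hBΓ, hBC⟩ := hl C (by simp)
    refine ⟨B :: lB, ?_, by simp [h2, hBC]⟩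
    intro D hD
    rcases List.mem_cons.mp hD with rfl | hD
    exacts [hBΓ, h1 D hD]

end CompletenessProof


/-- completeness of the translation `t` for `S4`:
    if `Γ^t ⊢_{S4(Q)} A^t` then `Γ ⊢_{S4_h} A`. -/
theorem trT_complete_S4 (Γ : Set Fm) (A : Fm)
    (hΓ : ∀ B ∈ Γ, Linf B) (hA : Linf A)
    (h : DerivM S4Q (trT '' Γ) (trT A)) :
    Deriv S4hAx Γ A := by
  classical
  by_contra hnd
  obtain ⟨l, hl, hprv⟩ := h
  obtain ⟨lB, hlBΓ, hmap⟩ := exists_preimage_list Γ l hl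
  set S : Set Fm := insert (Fm.neg A) {B | B ∈ lB} with hSdef
  have hSlinf : ∀ B ∈ S, Linf B := by
    rintro B hB
    rcases Set.mem_insert_iff.mp hB with rfl | hB
    · exact Linf.neg hA
    · exact hΓ B (hlBΓ B hB)
  have hScon : ∀ l' : List Fm, (∀ B ∈ l', B ∈ S) → ¬ Pr ((conjList l').imp Fm.bot) := by
    intro l' hl' hPr
    set lf := l'.filter (fun C => decide (C ≠ Fm.neg A)) with hlfdef
    have hlfΓ : ∀ C ∈ lf, C ∈ Γ := by
      intro C hC
      have h' := List.mem_filter.mp hC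
      have hne : C ≠ Fm.neg A := of_decide_eq_true h'.2
      rcases Set.mem_insert_iff.mp (hl' C h'.1) with rfl | hm
      · exact absurd rfl hne
      · exact hlBΓ C hm
    have hsub : ∀ C ∈ l', C ∈ Fm.neg A :: lf := by
      intro C hC
      by_cases hCA : C = Fm.neg A
      · exact hCA ▸ List.mem_cons_self
      · exact List.mem_cons_of_mem _ (List.mem_filter.mpr ⟨hC, decide_eq_true hCA⟩)
    have hlinfl' : ∀ C ∈ l', Linf C := fun C hC => hSlinf C (hl' C hC)
    have hlinfMem : ∀ C ∈ Fm.neg A :: lf, Linf C := by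
      intro C hC
      rcases List.mem_cons.mp hC with rfl | hC
      exacts [Linf.neg hA, hΓ C (hlfΓ C hC)]
    have h2 : Pr ((conjList (Fm.neg A :: lf)).imp Fm.bot) :=
      prv_bot_mono hsub hlinfMem hlinfl' hPr
    have h3 : Pr ((conjList lf).imp A) :=
      prv_discharge hA (fun C hC => hΓ C (hlfΓ C hC)) h2
    exact hnd ⟨lf, hlfΓ, h3⟩
  obtain ⟨X, hX, hSX⟩ := lindenbaum hSlinf hScon
  set i := (A :: lB).foldr (fun D acc => max (rk D) acc) 0 with hidef
  have hrk : ∀ C ∈ A :: lB, BoxLt C i :=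
    fun C hC => boxlt_mono (boxlt_rk C) (rk_le_foldr _ hC)
  have hms : msat (conjM l) (X, i) := by
    refine (msat_conjM l _).mpr ?_
    intro C hC
    rw [← hmap] at hC
    obtain ⟨B, hB, rfl⟩ := List.mem_map.mp hC
    exact (truth (hΓ B (hlBΓ B hB)) X hX i (hrk B (List.mem_cons_of_mem _ hB))).mpr
      (hSX (Set.mem_insert_of_mem _ hB))
  have hsat : msat (trT A) (X, i) := (s4q_sound hprv (X, i)) hms
  have hAX : A ∈ X := (truth hA X hX i (hrk A (by simp))).mp hsat
  exact hX.not_both hAX (hSX (Set.mem_insert _ _))
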